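/- An orthonormal triple u, v, w ∈ ℝ⁷ spans an associative 3-plane for one of its two orientations, i.e. |φ₀(u, v, w)| = 1, if and only if χ₀(u, v, w) = 0. -/

import Mathlib

open scoped RealInnerProductSpace

noncomputable section

abbrev E7 : Type := EuclideanSpace ℝ (Fin 7)

/-- `dxⁱ ∧ dxʲ ∧ dxᵏ` evaluated on the triple `(u, v, w)`. -/
def triDet (u v w : E7) (i j k : Fin 7) : ℝ :=
  Matrix.det !![u i, u j, u k; v i, v j, v k; w i, w j, w k]

/-- The standard G₂ 3-form `φ₀ = dx¹²³ + dx¹⁴⁵ + dx¹⁶⁷ + dx²⁴⁶ − dx²⁵⁷ − dx³⁴⁷ − dx³⁵⁶`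
(here with 0-indexed coordinates). -/
def phi0 (u v w : E7) : ℝ :=
  triDet u v w 0 1 2 + triDet u v w 0 3 4 + triDet u v w 0 5 6 +
    triDet u v w 1 3 5 - triDet u v w 1 4 6 - triDet u v w 2 3 6 - triDet u v w 2 4 5

/-- `dxⁱ ∧ dxʲ ∧ dxᵏ ∧ dxˡ` evaluated on the quadruple `(u, v, w, x)`. -/
def quadDet (u v w x : E7) (i j k l : Fin 7) : ℝ :=
  Matrix.det !![u i, u j, u k, u l; v i, v j, v k, v l;
                w i, w j, w k, w l; x i, x j, x k, x l]

/-- The 4-form `ψ₀ = −dx¹²⁴⁷ − dx¹²⁵⁶ − dx¹³⁴⁶ + dx¹³⁵⁷ + dx²³⁴⁵ + dx²³⁶⁷ + dx⁴⁵⁶⁷`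
(here with 0-indexed coordinates). -/
def psi0 (u v w x : E7) : ℝ :=
  -quadDet u v w x 0 1 3 6 - quadDet u v w x 0 1 4 5 - quadDet u v w x 0 2 3 5 +
    quadDet u v w x 0 2 4 6 + quadDet u v w x 1 2 3 4 + quadDet u v w x 1 2 5 6 +
    quadDet u v w x 3 4 5 6

lemma det_fin_four (M : Matrix (Fin 4) (Fin 4) ℝ) :
    M.det = M 0 0 * (M 1 1 * (M 2 2 * M 3 3 - M 2 3 * M 3 2)
                   - M 1 2 * (M 2 1 * M 3 3 - M 2 3 * M 3 1)
                   + M 1 3 * (M 2 1 * M 3 2 - M 2 2 * M 3 1))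
          - M 0 1 * (M 1 0 * (M 2 2 * M 3 3 - M 2 3 * M 3 2)
                   - M 1 2 * (M 2 0 * M 3 3 - M 2 3 * M 3 0)
                   + M 1 3 * (M 2 0 * M 3 2 - M 2 2 * M 3 0))
          + M 0 2 * (M 1 0 * (M 2 1 * M 3 3 - M 2 3 * M 3 1)
                   - M 1 1 * (M 2 0 * M 3 3 - M 2 3 * M 3 0)
                   + M 1 3 * (M 2 0 * M 3 1 - M 2 1 * M 3 0))
          - M 0 3 * (M 1 0 * (M 2 1 * M 3 2 - M 2 2 * M 3 1)
                   - M 1 1 * (M 2 0 * M 3 2 - M 2 2 * M 3 0)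
                   + M 1 2 * (M 2 0 * M 3 1 - M 2 1 * M 3 0)) := by
  rw [Matrix.det_succ_row_zero]
  simp [Fin.sum_univ_succ, Matrix.det_fin_three, Matrix.submatrix, Fin.succAbove,
    show (Fin.succ 2 : Fin 4) = 3 from rfl, show (Fin.castSucc 2 : Fin 4) = 2 from rfl,
    show ((1:Fin 4) < 3) from by decide]
  ring


lemma phi0_expand (u v w : E7) : phi0 u v w =
    (-u 6 * v 5 * w 0 + u 6 * v 4 * w 1 + u 6 * v 3 * w 2 - u 6 * v 2 * w 3 - u 6 * v 1 * w 4 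
      + u 6 * v 0 * w 5 + u 5 * v 6 * w 0 + u 5 * v 4 * w 2 - u 5 * v 3 * w 1 
      - u 5 * v 2 * w 4 + u 5 * v 1 * w 3 - u 5 * v 0 * w 6 - u 4 * v 6 * w 1 
      - u 4 * v 5 * w 2 - u 4 * v 3 * w 0 + u 4 * v 2 * w 5 + u 4 * v 1 * w 6 
      + u 4 * v 0 * w 3 - u 3 * v 6 * w 2 + u 3 * v 5 * w 1 + u 3 * v 4 * w 0 
      + u 3 * v 2 * w 6 - u 3 * v 1 * w 5 - u 3 * v 0 * w 4 + u 2 * v 6 * w 3 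
      + u 2 * v 5 * w 4 - u 2 * v 4 * w 5 - u 2 * v 3 * w 6 - u 2 * v 1 * w 0 
      + u 2 * v 0 * w 1 + u 1 * v 6 * w 4 - u 1 * v 5 * w 3 - u 1 * v 4 * w 6 
      + u 1 * v 3 * w 5 + u 1 * v 2 * w 0 - u 1 * v 0 * w 2 - u 0 * v 6 * w 5 
      + u 0 * v 5 * w 6 - u 0 * v 4 * w 3 + u 0 * v 3 * w 4 - u 0 * v 2 * w 1 
      + u 0 * v 1 * w 2) := by
  simp [phi0, triDet, Matrix.det_fin_three]
  ring

lemma psi0_expand_0 (u v w : E7) : psi0 (EuclideanSpace.single (0 : Fin 7) (1:ℝ)) u v w =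
    (-u 6 * v 4 * w 2 + u 6 * v 3 * w 1 + u 6 * v 2 * w 4 - u 6 * v 1 * w 3 + u 5 * v 4 * w 1 
      + u 5 * v 3 * w 2 - u 5 * v 2 * w 3 - u 5 * v 1 * w 4 + u 4 * v 6 * w 2 
      - u 4 * v 5 * w 1 - u 4 * v 2 * w 6 + u 4 * v 1 * w 5 - u 3 * v 6 * w 1 
      - u 3 * v 5 * w 2 + u 3 * v 2 * w 5 + u 3 * v 1 * w 6 - u 2 * v 6 * w 4 
      + u 2 * v 5 * w 3 + u 2 * v 4 * w 6 - u 2 * v 3 * w 5 + u 1 * v 6 * w 3 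
      + u 1 * v 5 * w 4 - u 1 * v 4 * w 5 - u 1 * v 3 * w 6) := by
  simp [psi0, quadDet, det_fin_four, EuclideanSpace.single_apply]
  ring

lemma psi0_expand_1 (u v w : E7) : psi0 (EuclideanSpace.single (1 : Fin 7) (1:ℝ)) u v w =
    (-u 6 * v 5 * w 2 - u 6 * v 3 * w 0 + u 6 * v 2 * w 5 + u 6 * v 0 * w 3 + u 5 * v 6 * w 2 
      - u 5 * v 4 * w 0 - u 5 * v 2 * w 6 + u 5 * v 0 * w 4 + u 4 * v 5 * w 0 
      - u 4 * v 3 * w 2 + u 4 * v 2 * w 3 - u 4 * v 0 * w 5 + u 3 * v 6 * w 0 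
      + u 3 * v 4 * w 2 - u 3 * v 2 * w 4 - u 3 * v 0 * w 6 - u 2 * v 6 * w 5 
      + u 2 * v 5 * w 6 - u 2 * v 4 * w 3 + u 2 * v 3 * w 4 - u 0 * v 6 * w 3 
      - u 0 * v 5 * w 4 + u 0 * v 4 * w 5 + u 0 * v 3 * w 6) := by
  simp [psi0, quadDet, det_fin_four, EuclideanSpace.single_apply]
  ring

lemma psi0_expand_2 (u v w : E7) : psi0 (EuclideanSpace.single (2 : Fin 7) (1:ℝ)) u v w =
    (u 6 * v 5 * w 1 + u 6 * v 4 * w 0 - u 6 * v 1 * w 5 - u 6 * v 0 * w 4 - u 5 * v 6 * w 1 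
      - u 5 * v 3 * w 0 + u 5 * v 1 * w 6 + u 5 * v 0 * w 3 - u 4 * v 6 * w 0 
      + u 4 * v 3 * w 1 - u 4 * v 1 * w 3 + u 4 * v 0 * w 6 + u 3 * v 5 * w 0 
      - u 3 * v 4 * w 1 + u 3 * v 1 * w 4 - u 3 * v 0 * w 5 + u 1 * v 6 * w 5 
      - u 1 * v 5 * w 6 + u 1 * v 4 * w 3 - u 1 * v 3 * w 4 + u 0 * v 6 * w 4 
      - u 0 * v 5 * w 3 - u 0 * v 4 * w 6 + u 0 * v 3 * w 5) := by
  simp [psi0, quadDet, det_fin_four, EuclideanSpace.single_apply]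
  ring

lemma psi0_expand_3 (u v w : E7) : psi0 (EuclideanSpace.single (3 : Fin 7) (1:ℝ)) u v w =
    (-u 6 * v 5 * w 4 + u 6 * v 4 * w 5 + u 6 * v 1 * w 0 - u 6 * v 0 * w 1 + u 5 * v 6 * w 4 
      - u 5 * v 4 * w 6 + u 5 * v 2 * w 0 - u 5 * v 0 * w 2 - u 4 * v 6 * w 5 
      + u 4 * v 5 * w 6 - u 4 * v 2 * w 1 + u 4 * v 1 * w 2 - u 2 * v 5 * w 0 
      + u 2 * v 4 * w 1 - u 2 * v 1 * w 4 + u 2 * v 0 * w 5 - u 1 * v 6 * w 0 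
      - u 1 * v 4 * w 2 + u 1 * v 2 * w 4 + u 1 * v 0 * w 6 + u 0 * v 6 * w 1 
      + u 0 * v 5 * w 2 - u 0 * v 2 * w 5 - u 0 * v 1 * w 6) := by
  simp [psi0, quadDet, det_fin_four, EuclideanSpace.single_apply]
  ring

lemma psi0_expand_4 (u v w : E7) : psi0 (EuclideanSpace.single (4 : Fin 7) (1:ℝ)) u v w =
    (u 6 * v 5 * w 3 - u 6 * v 3 * w 5 - u 6 * v 2 * w 0 + u 6 * v 0 * w 2 - u 5 * v 6 * w 3 
      + u 5 * v 3 * w 6 + u 5 * v 1 * w 0 - u 5 * v 0 * w 1 + u 3 * v 6 * w 5 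
      - u 3 * v 5 * w 6 + u 3 * v 2 * w 1 - u 3 * v 1 * w 2 + u 2 * v 6 * w 0 
      - u 2 * v 3 * w 1 + u 2 * v 1 * w 3 - u 2 * v 0 * w 6 - u 1 * v 5 * w 0 
      + u 1 * v 3 * w 2 - u 1 * v 2 * w 3 + u 1 * v 0 * w 5 - u 0 * v 6 * w 2 
      + u 0 * v 5 * w 1 + u 0 * v 2 * w 6 - u 0 * v 1 * w 5) := by
  simp [psi0, quadDet, det_fin_four, EuclideanSpace.single_apply]
  ring

lemma psi0_expand_5 (u v w : E7) : psi0 (EuclideanSpace.single (5 : Fin 7) (1:ℝ)) u v w =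
    (-u 6 * v 4 * w 3 + u 6 * v 3 * w 4 - u 6 * v 2 * w 1 + u 6 * v 1 * w 2 + u 4 * v 6 * w 3 
      - u 4 * v 3 * w 6 - u 4 * v 1 * w 0 + u 4 * v 0 * w 1 - u 3 * v 6 * w 4 
      + u 3 * v 4 * w 6 - u 3 * v 2 * w 0 + u 3 * v 0 * w 2 + u 2 * v 6 * w 1 
      + u 2 * v 3 * w 0 - u 2 * v 1 * w 6 - u 2 * v 0 * w 3 - u 1 * v 6 * w 2 
      + u 1 * v 4 * w 0 + u 1 * v 2 * w 6 - u 1 * v 0 * w 4 - u 0 * v 4 * w 1 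
      - u 0 * v 3 * w 2 + u 0 * v 2 * w 3 + u 0 * v 1 * w 4) := by
  simp [psi0, quadDet, det_fin_four, EuclideanSpace.single_apply]
  ring

lemma psi0_expand_6 (u v w : E7) : psi0 (EuclideanSpace.single (6 : Fin 7) (1:ℝ)) u v w =
    (u 5 * v 4 * w 3 - u 5 * v 3 * w 4 + u 5 * v 2 * w 1 - u 5 * v 1 * w 2 - u 4 * v 5 * w 3 
      + u 4 * v 3 * w 5 + u 4 * v 2 * w 0 - u 4 * v 0 * w 2 + u 3 * v 5 * w 4 
      - u 3 * v 4 * w 5 - u 3 * v 1 * w 0 + u 3 * v 0 * w 1 - u 2 * v 5 * w 1 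
      - u 2 * v 4 * w 0 + u 2 * v 1 * w 5 + u 2 * v 0 * w 4 + u 1 * v 5 * w 2 
      + u 1 * v 3 * w 0 - u 1 * v 2 * w 5 - u 1 * v 0 * w 3 + u 0 * v 4 * w 2 
      - u 0 * v 3 * w 1 - u 0 * v 2 * w 4 + u 0 * v 1 * w 3) := by
  simp [psi0, quadDet, det_fin_four, EuclideanSpace.single_apply]
  ring

set_option maxHeartbeats 2000000 in
lemma key_poly (u v w : E7) :
    phi0 u v w ^ 2 + ∑ i : Fin 7, (psi0 (EuclideanSpace.single i (1:ℝ)) u v w) ^ 2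
    = (∑ i : Fin 7, u i * u i) * (∑ i : Fin 7, v i * v i) * (∑ i : Fin 7, w i * w i)
      + 2 * (∑ i : Fin 7, u i * v i) * (∑ i : Fin 7, u i * w i) * (∑ i : Fin 7, v i * w i)
      - (∑ i : Fin 7, u i * u i) * (∑ i : Fin 7, v i * w i) ^ 2
      - (∑ i : Fin 7, v i * v i) * (∑ i : Fin 7, u i * w i) ^ 2
      - (∑ i : Fin 7, w i * w i) * (∑ i : Fin 7, u i * v i) ^ 2 := by
  simp only [Fin.sum_univ_seven, phi0_expand, psi0_expand_0, psi0_expand_1, psi0_expand_2,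
    psi0_expand_3, psi0_expand_4, psi0_expand_5, psi0_expand_6]
  ring


/-- An orthonormal triple `u, v, w ∈ ℝ⁷` spans an associative 3-plane for one of its
two orientations, i.e. `|φ₀(u,v,w)| = 1`, if and only if `χ₀(u,v,w) = 0`. -/
theorem statement5 (chi : E7 → E7 → E7 → E7)
    (hchi : ∀ a b c d : E7, ⟪a, (1/2 : ℝ) • chi b c d⟫ = psi0 a b c d)
    (u v w : E7)
    (hu : ‖u‖ = 1) (hv : ‖v‖ = 1) (hw : ‖w‖ = 1)
    (huv : ⟪u, v⟫ = 0) (huw : ⟪u, w⟫ = 0) (hvw : ⟪v, w⟫ = 0) :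
    |phi0 u v w| = 1 ↔ chi u v w = 0 := by
  have inner_sum : ∀ x y : E7, ⟪x, y⟫ = ∑ i : Fin 7, x i * y i := by
    intro x y
    simp [PiLp.inner_apply, RCLike.inner_apply, mul_comm]
  have hA : ∑ i : Fin 7, u i * u i = 1 := by
    rw [← inner_sum, real_inner_self_eq_norm_sq, hu]; norm_num
  have hB : ∑ i : Fin 7, v i * v i = 1 := by
    rw [← inner_sum, real_inner_self_eq_norm_sq, hv]; norm_num
  have hC : ∑ i : Fin 7, w i * w i = 1 := by
    rw [← inner_sum, real_inner_self_eq_norm_sq, hw]; norm_num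
  have hD : ∑ i : Fin 7, u i * v i = 1 * 0 := by rw [← inner_sum, huv]; norm_num
  have hE : ∑ i : Fin 7, u i * w i = 1 * 0 := by rw [← inner_sum, huw]; norm_num
  have hF : ∑ i : Fin 7, v i * w i = 1 * 0 := by rw [← inner_sum, hvw]; norm_num
  have key : phi0 u v w ^ 2
      + ∑ i : Fin 7, (psi0 (EuclideanSpace.single i (1:ℝ)) u v w) ^ 2 = 1 := by
    rw [key_poly, hA, hB, hC, hD, hE, hF]; ring
  have hcomp : ∀ i : Fin 7,
      chi u v w i = 2 * psi0 (EuclideanSpace.single i (1:ℝ)) u v w := by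
    intro i
    have h := hchi (EuclideanSpace.single i (1:ℝ)) u v w
    rw [real_inner_smul_right, EuclideanSpace.inner_single_left] at h
    simp only [map_one, one_mul] at h
    linarith
  constructor
  · intro habs
    have h1 : phi0 u v w ^ 2 = 1 := by rw [← sq_abs, habs]; norm_num
    have h2 : ∑ i : Fin 7, (psi0 (EuclideanSpace.single i (1:ℝ)) u v w) ^ 2 = 0 := by
      linarith
    have h3 := (Finset.sum_eq_zero_iff_of_nonneg
      (fun i _ => sq_nonneg (psi0 (EuclideanSpace.single i (1:ℝ)) u v w))).mp h2
    ext i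
    have h4 : psi0 (EuclideanSpace.single i (1:ℝ)) u v w = 0 :=
      (pow_eq_zero_iff two_ne_zero).mp (h3 i (Finset.mem_univ i))
    show chi u v w i = 0
    rw [hcomp i, h4]; ring
  · intro hz
    have hpz : ∀ i : Fin 7, psi0 (EuclideanSpace.single i (1:ℝ)) u v w = 0 := by
      intro i
      have h := hcomp i
      rw [hz] at h
      have h0 : (0 : E7) i = 0 := rfl
      rw [h0] at h
      linarith
    have h2 : ∑ i : Fin 7, (psi0 (EuclideanSpace.single i (1:ℝ)) u v w) ^ 2 = 0 :=
      Finset.sum_eq_zero fun i _ => by rw [hpz i]; ring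
    have h1 : phi0 u v w ^ 2 = 1 := by linarith
    have h4 : (|phi0 u v w| - 1) * (|phi0 u v w| + 1) = 0 := by
      have hs := sq_abs (phi0 u v w)
      nlinarith [hs]
    rcases mul_eq_zero.mp h4 with h5 | h5
    · linarith
    · have := abs_nonneg (phi0 u v w); linarith
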